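/- Let H be a simple hypergraph with e-index k, and suppose u, v are vertices of H with exact distance ed_H(u,v) = t < ∞. Then the matrices I_k, U(H), U(H)², ..., U(H)^t are linearly independent over ℂ. -/

import Mathlib

variable {V : Type} [Fintype V] [DecidableEq V]

/-- A finite hypergraph: a finite vertex set and a multiset of nonempty edges. -/
structure FinHypergraph (V : Type) [Fintype V] [DecidableEq V] where
  verts : Finset V
  edges : Multiset (Finset V)
  edges_sub : ∀ e ∈ edges, e ⊆ verts
  edges_nonempty : ∀ e ∈ edges, e.Nonempty

open Classical in
/-- `IH H` is `I(H)`: all parts of 2-partitions of edges plus all singletons of `V(H)`. -/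
noncomputable def IH (H : FinHypergraph V) : Finset (Finset V) :=
  Finset.univ.filter fun S =>
    (S.Nonempty ∧ ∃ e ∈ H.edges, S ⊂ e) ∨ ∃ v ∈ H.verts, S = {v}

/-- The unified matrix of a hypergraph, indexed by `I(H)`. -/
noncomputable def U (H : FinHypergraph V) : Matrix ↥(IH H) ↥(IH H) ℝ := fun S T =>
  if (S : Finset V) = (T : Finset V) then
    (if (S : Finset V).card = 1 then (H.edges.count (S : Finset V) : ℝ) else 0)
  else if Disjoint (S : Finset V) (T : Finset V) then
    (H.edges.count ((S : Finset V) ∪ (T : Finset V)) : ℝ)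
  else 0

/-- Degree of a vertex: number of edges (with multiplicity) containing it. -/
def deg (H : FinHypergraph V) (v : V) : ℕ := (H.edges.filter (fun e => v ∈ e)).card

/-- Unified degree of a set `S`: number of edges (with multiplicity) containing `S`. -/
def udeg (H : FinHypergraph V) (S : Finset V) : ℕ := (H.edges.filter (fun e => S ⊆ e)).card

/-- `incl H` = ∂(H): number of edges of cardinality ≥ 2 properly contained in another edge. -/
noncomputable def incl (H : FinHypergraph V) : ℕ :=
  Multiset.card (H.edges.filter (fun e => 2 ≤ e.card ∧ ∃ e' ∈ H.edges, e ⊂ e'))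

/-- A hypergraph is simple if it has no multiple edges and no loops. -/
def Simple (H : FinHypergraph V) : Prop :=
  H.edges.Nodup ∧ ∀ e ∈ H.edges, 2 ≤ e.card

/-- `tau S` = τ(S): the set of unordered 2-partitions of `S`. -/
def tau (S : Finset V) : Finset (Finset (Finset V)) :=
  (S.powerset.filter fun A => A.Nonempty ∧ A ⊂ S).image fun A => {A, S \ A}


/-- Two parts are adjacent when they form a 2-partition of an edge of `H`. -/
def Adj (H : FinHypergraph V) (S T : Finset V) : Prop :=
  S.Nonempty ∧ T.Nonempty ∧ Disjoint S T ∧ S ∪ T ∈ H.edges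

/-- There is an exact path of length `n` joining some `S ∋ u` and `S' ∋ v`. -/
def ExactPathBetween (H : FinHypergraph V) (u v : V) (n : ℕ) : Prop :=
  ∃ l : List (Finset V), l.length = n + 1 ∧ l.Nodup ∧ (∀ S ∈ l, S ∈ IH H) ∧
    l.Chain' (Adj H) ∧ (∃ S, l.head? = some S ∧ u ∈ S) ∧
    (∃ S, l.getLast? = some S ∧ v ∈ S)

set_option linter.unnecessarySimpa false

-- auxiliary
lemma IH_nonempty (H : FinHypergraph V) {S : Finset V} (hS : S ∈ IH H) : S.Nonempty := by
  classical
  simp only [IH, Finset.mem_filter] at hS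
  rcases hS.2 with ⟨h, _⟩ | ⟨w, _, rfl⟩
  · exact h
  · exact Finset.singleton_nonempty w

def partGraph (H : FinHypergraph V) : SimpleGraph ↥(IH H) where
  Adj a b := Adj H (a : Finset V) (b : Finset V)
  symm := by
    constructor
    rintro a b ⟨h1, h2, h3, h4⟩
    exact ⟨h2, h1, h3.symm, by rwa [Finset.union_comm]⟩
  loopless := by
    constructor
    rintro a ⟨h1, _, h3, _⟩
    exact h1.ne_empty (by simpa using disjoint_self.mp h3)

lemma U_nonneg (H : FinHypergraph V) (a b : ↥(IH H)) : 0 ≤ U H a b := by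
  unfold U; split_ifs <;> positivity

lemma U_pow_nonneg (H : FinHypergraph V) (r : ℕ) (a b : ↥(IH H)) : 0 ≤ (U H ^ r) a b := by
  induction r generalizing a b with
  | zero => rw [pow_zero, Matrix.one_apply]; split_ifs <;> norm_num
  | succ n ih =>
    rw [pow_succ, Matrix.mul_apply]
    exact Finset.sum_nonneg fun k _ => mul_nonneg (ih a k) (U_nonneg H k b)

lemma U_pos_of_adj (H : FinHypergraph V) {a b : ↥(IH H)} (h : (partGraph H).Adj a b) :
    0 < U H a b := by
  obtain ⟨h1, h2, h3, h4⟩ := h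
  have hne : (a : Finset V) ≠ (b : Finset V) := by
    intro he
    rw [← he] at h3
    exact h1.ne_empty (disjoint_self.mp h3)
  unfold U
  rw [if_neg hne, if_pos h3]
  exact_mod_cast Multiset.count_pos.mpr h4

lemma adj_of_U_ne (H : FinHypergraph V) (hs : Simple H) {a b : ↥(IH H)}
    (h : U H a b ≠ 0) : (partGraph H).Adj a b := by
  unfold U at h
  split_ifs at h with he hc hd
  · exfalso
    have hmem : (a : Finset V) ∈ H.edges := by
      by_contra hm
      rw [Multiset.count_eq_zero_of_notMem hm] at h
      simp at h
    have := hs.2 _ hmem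
    omega
  · simp at h
  · refine ⟨IH_nonempty H a.2, IH_nonempty H b.2, hd, ?_⟩
    by_contra hm
    rw [Multiset.count_eq_zero_of_notMem hm] at h
    simp at h
  · simp at h

/-- entry nonzero implies a walk -/
lemma walk_of_pow_ne (H : FinHypergraph V) (hs : Simple H) :
    ∀ (r : ℕ) (a b : ↥(IH H)), (U H ^ r) a b ≠ 0 →
      ∃ w : (partGraph H).Walk a b, w.length = r := by
  intro r
  induction r with
  | zero =>
    intro a b h
    rw [pow_zero, Matrix.one_apply] at h
    split_ifs at h with he
    · exact ⟨he ▸ SimpleGraph.Walk.nil, by subst he; rfl⟩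
    · simp at h
  | succ n ih =>
    intro a b h
    rw [pow_succ, Matrix.mul_apply] at h
    obtain ⟨k, _, hk⟩ := Finset.exists_ne_zero_of_sum_ne_zero h
    have h1 : (U H ^ n) a k ≠ 0 := fun h0 => hk (by rw [h0, zero_mul])
    have h2 : U H k b ≠ 0 := fun h0 => hk (by rw [h0, mul_zero])
    obtain ⟨w, hw⟩ := ih a k h1
    exact ⟨w.concat (adj_of_U_ne H hs h2), by rw [SimpleGraph.Walk.length_concat, hw]⟩

/-- a walk implies entry positive -/
lemma pow_pos_of_walk (H : FinHypergraph V) {a b : ↥(IH H)} (w : (partGraph H).Walk a b) :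
    0 < (U H ^ w.length) a b := by
  induction w with
  | nil => simp [Matrix.one_apply]
  | @cons x y z hadj w ih =>
    rw [SimpleGraph.Walk.length_cons, pow_succ', Matrix.mul_apply]
    apply Finset.sum_pos' (fun k _ => mul_nonneg (U_nonneg H x k) (U_pow_nonneg H _ k z))
    exact ⟨y, Finset.mem_univ y, mul_pos (U_pos_of_adj H hadj) ih⟩

/-- chain list to walk -/
lemma walk_of_chain (H : FinHypergraph V) :
    ∀ (l : List (Finset V)) (_ : ∀ S ∈ l, S ∈ IH H) (_ : l.Chain' (Adj H))
      (a b : ↥(IH H)), l.head? = some (a : Finset V) → l.getLast? = some (b : Finset V) →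
      ∃ w : (partGraph H).Walk a b, w.length + 1 = l.length := by
  intro l
  induction l with
  | nil => intro _ _ a b h; simp at h
  | cons x rest ih =>
    intro hm hc a b hh hl
    have hax : (a : Finset V) = x := by simpa using hh.symm
    cases rest with
    | nil =>
      have hbx : (b : Finset V) = x := by simpa using hl.symm
      have hab : a = b := Subtype.ext (hax.trans hbx.symm)
      exact ⟨hab ▸ SimpleGraph.Walk.nil, by subst hab; rfl⟩
    | cons y rest' =>
      have hy : y ∈ IH H := hm y (by simp)
      have hadj : (partGraph H).Adj a ⟨y, hy⟩ := by
        have := (List.isChain_cons_cons.mp hc).1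
        show Adj H (a : Finset V) y
        rwa [hax]
      have hl' : (y :: rest').getLast? = some (b : Finset V) := by
        rwa [List.getLast?_cons_cons] at hl
      obtain ⟨w, hw⟩ := ih (fun S hS => hm S (List.mem_cons_of_mem _ hS))
        (List.isChain_cons_cons.mp hc).2 ⟨y, hy⟩ b (by simp) hl'
      exact ⟨SimpleGraph.Walk.cons hadj w, by
        simp only [SimpleGraph.Walk.length_cons, List.length_cons] at hw ⊢; omega⟩

/-- walk to exact path -/
lemma exactPath_of_walk (H : FinHypergraph V) {u v : V} {a b : ↥(IH H)}
    (w : (partGraph H).Walk a b) (hu : u ∈ (a : Finset V)) (hv : v ∈ (b : Finset V)) :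
    ExactPathBetween H u v w.bypass.length := by
  set p := w.bypass with hp
  have hpath : p.IsPath := SimpleGraph.Walk.bypass_isPath w
  refine ⟨p.support.map Subtype.val, ?_, ?_, ?_, ?_, ?_, ?_⟩
  · simp [SimpleGraph.Walk.length_support]
  · exact hpath.support_nodup.map Subtype.val_injective
  · intro S hS
    obtain ⟨s, _, rfl⟩ := List.mem_map.mp hS
    exact s.property
  · exact List.isChain_map_of_isChain Subtype.val (fun x y h => h) p.isChain_adj_support
  · refine ⟨(a : Finset V), ?_, hu⟩
    rw [List.head?_map, p.support_eq_cons]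
    rfl
  · refine ⟨(b : Finset V), ?_, hv⟩
    rw [List.getLast?_map, List.getLast?_eq_getLast p.support_ne_nil, p.getLast_support]
    rfl


theorem powers_linearIndependent_of_exact_distance (H : FinHypergraph V) (hs : Simple H)
    (u v : V) (t : ℕ) (h1 : ExactPathBetween H u v t)
    (h2 : ∀ s : ℕ, ExactPathBetween H u v s → t ≤ s) :
    LinearIndependent ℂ
      (fun r : Fin (t+1) => ((U H).map (Complex.ofReal : ℝ → ℂ)) ^ (r : ℕ)) := by
  classical
  obtain ⟨l, hlen, hnodup, hmem, hchain, ⟨S0, hS0, hu⟩, ⟨St, hSt, hv⟩⟩ := h1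
  have hlt : ∀ i : Fin (t+1), (i : ℕ) < l.length := fun i => by rw [hlen]; exact i.isLt
  set a : Fin (t+1) → ↥(IH H) := fun i =>
    ⟨l.get ⟨i, hlt i⟩, hmem _ (List.get_mem l _)⟩ with ha
  have hgetl : ∀ i : Fin (t+1), l[(i:ℕ)]? = some (a i : Finset V) := fun i => by
    rw [List.getElem?_eq_getElem (hlt i)]; rfl
  have hu0 : u ∈ (a 0 : Finset V) := by
    have : l.head? = some (a 0 : Finset V) := by
      rw [List.head?_eq_getElem?]
      exact hgetl 0
    rw [this] at hS0
    exact (Option.some_injective _ hS0) ▸ hu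
  have hvt : v ∈ (a (Fin.last t) : Finset V) := by
    have : l.getLast? = some (a (Fin.last t) : Finset V) := by
      rw [List.getLast?_eq_getElem?, hlen]
      simpa using hgetl (Fin.last t)
    rw [this] at hSt
    exact (Option.some_injective _ hSt) ▸ hv
  -- walks along the path
  have walkTake : ∀ i : Fin (t+1), ∃ w : (partGraph H).Walk (a 0) (a i), w.length = (i : ℕ) := by
    intro i
    obtain ⟨w, hw⟩ := walk_of_chain H (l.take ((i : ℕ) + 1))
      (fun S hS => hmem S (List.mem_of_mem_take hS)) (hchain.take _) (a 0) (a i)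
      (by rw [List.head?_eq_getElem?, List.getElem?_take_of_lt (by omega)]; exact hgetl 0)
      (by
        rw [List.getLast?_eq_getElem?, List.length_take, hlen,
          min_eq_left (by omega : (i:ℕ) + 1 ≤ t + 1)]
        simpa using List.getElem?_take_of_lt (Nat.lt_succ_self (i:ℕ)) ▸ hgetl i)
    refine ⟨w, ?_⟩
    rw [List.length_take, hlen, min_eq_left (by omega : (i:ℕ) + 1 ≤ t + 1)] at hw
    omega
  have walkDrop : ∀ i : Fin (t+1),
      ∃ w : (partGraph H).Walk (a i) (a (Fin.last t)), w.length = t - (i : ℕ) := by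
    intro i
    obtain ⟨w, hw⟩ := walk_of_chain H (l.drop (i : ℕ))
      (fun S hS => hmem S (List.mem_of_mem_drop hS)) (hchain.drop _) (a i) (a (Fin.last t))
      (by rw [List.head?_drop]; exact hgetl i)
      (by
        rw [List.getLast?_eq_getElem?, List.length_drop, hlen, List.getElem?_drop]
        have : (i : ℕ) + (t + 1 - (i:ℕ) - 1) = t := by omega
        rw [this]
        simpa using hgetl (Fin.last t))
    refine ⟨w, ?_⟩
    rw [List.length_drop, hlen] at hw
    omega
  -- triangular structure
  have F1 : ∀ (r : ℕ) (i : Fin (t+1)), r < (i : ℕ) → (U H ^ r) (a 0) (a i) = 0 := by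
    intro r i hr
    by_contra hne
    obtain ⟨w1, hw1⟩ := walk_of_pow_ne H hs r (a 0) (a i) hne
    obtain ⟨w2, hw2⟩ := walkDrop i
    have hpath := exactPath_of_walk H (w1.append w2) hu0 hvt
    have hle := h2 _ hpath
    have hble := SimpleGraph.Walk.length_bypass_le (w1.append w2)
    rw [SimpleGraph.Walk.length_append, hw1, hw2] at hble
    have : (i : ℕ) ≤ t := by omega
    omega
  have F2 : ∀ i : Fin (t+1), 0 < (U H ^ (i : ℕ)) (a 0) (a i) := by
    intro i
    obtain ⟨w, hw⟩ := walkTake i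
    have := pow_pos_of_walk H w
    rwa [hw] at this
  -- extract entrywise equations
  rw [Fintype.linearIndependent_iff]
  intro g hg
  have hmap : ∀ r : ℕ, ((U H).map (Complex.ofReal : ℝ → ℂ)) ^ r
      = ((U H) ^ r).map (Complex.ofReal : ℝ → ℂ) := by
    intro r
    have h0 : (U H).map (Complex.ofReal : ℝ → ℂ) = Complex.ofRealHom.mapMatrix (U H) := rfl
    have h1 : ((U H) ^ r).map (Complex.ofReal : ℝ → ℂ)
        = Complex.ofRealHom.mapMatrix ((U H) ^ r) := rfl
    rw [h0, h1, map_pow]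
  have key : ∀ i : Fin (t+1),
      ∑ r : Fin (t+1), g r * (((U H) ^ (r : ℕ)) (a 0) (a i) : ℂ) = 0 := by
    intro i
    have h := congrFun (congrFun hg (a 0)) (a i)
    rw [Matrix.sum_apply] at h
    simpa only [Matrix.smul_apply, hmap, Matrix.map_apply, smul_eq_mul,
      Matrix.zero_apply] using h
  have step : ∀ i : Fin (t+1), (∀ j : Fin (t+1), (i : ℕ) < (j : ℕ) → g j = 0) → g i = 0 := by
    intro i hj
    have hsum := key i
    rw [Finset.sum_eq_single i (fun b _ hbi => ?_) (fun hb => absurd (Finset.mem_univ i) hb)]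
      at hsum
    · have hci : (((U H) ^ (i : ℕ)) (a 0) (a i) : ℂ) ≠ 0 :=
        Complex.ofReal_ne_zero.mpr (ne_of_gt (F2 i))
      exact (mul_eq_zero.mp hsum).resolve_right hci
    · rcases lt_or_gt_of_ne (fun h => hbi (Fin.ext h) : (b : ℕ) ≠ (i : ℕ)) with hlt' | hgt'
      · rw [F1 b i hlt', Complex.ofReal_zero, mul_zero]
      · rw [hj b hgt', zero_mul]
  have down : ∀ n : ℕ, ∀ i : Fin (t+1), t - (i : ℕ) ≤ n → g i = 0 := by
    intro n
    induction n with
    | zero =>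
      intro i hi
      refine step i fun j hij => absurd (j.isLt) (by omega)
    | succ n ih =>
      intro i hi
      exact step i fun j hij => ih j (by have := j.isLt; omega)
  exact fun i => down t i (by omega)
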